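/- arXiv:1201.4493 — 6 statements merged into one kernel-verified Lean document; each statement's English description precedes it below -/
import Mathlib

section
/- The reduced form of a sign sequence is well-defined: for any sequence t ∈ {+,-}^n, the process of repeatedly replacing a pair (t_a, t_b) = (-, +) with a < b and all entries strictly between a and b equal to 0 by (0,0) terminates, and the resulting sequence (in which no + appears to the right of a -, ignoring 0's) is independent of the order in which such replacements are performed. -/
/-- One reduction step: pick indices `a < b` with `t a = -` (encoded `some false`),
`t b = +` (encoded `some true`), all entries strictly between equal to `0`
(encoded `none`), and replace the entries at `a` and `b` by `0`. -/
def Step {n : ℕ} (t t' : Fin n → Option Bool) : Prop :=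
  ∃ a b : Fin n, a < b ∧ t a = some false ∧ t b = some true ∧
    (∀ i : Fin n, a < i → i < b → t i = none) ∧
    t' = Function.update (Function.update t a none) b none

/-- A sequence is reduced if no `+` appears to the right of a `-` (ignoring `0`'s);
equivalently, no reduction step applies. -/
def Reduced {n : ℕ} (t : Fin n → Option Bool) : Prop :=
  ∀ a b : Fin n, a < b → t a = some false → t b ≠ some true

namespace RFWD

open Function Relation

variable {n : ℕ}

/-- Number of nonzero entries. -/
def wt (t : Fin n → Option Bool) : ℕ :=
  (Finset.univ.filter fun i => (t i).isSome).card

lemma step_apply {t : Fin n → Option Bool} {a b : Fin n} (hab : a ≠ b) (i : Fin n) :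
    Function.update (Function.update t a none) b none i =
      if i = a ∨ i = b then none else t i := by
  rcases eq_or_ne i b with rfl | hb
  · simp
  rcases eq_or_ne i a with rfl | ha
  · simp [Function.update_of_ne hb]
  · simp [Function.update_of_ne hb, Function.update_of_ne ha, ha, hb]

lemma step_wt {t t' : Fin n → Option Bool} (h : Step t t') : wt t' < wt t := by
  obtain ⟨a, b, hab, ha, hb, _, rfl⟩ := h
  apply Finset.card_lt_card
  constructor
  · intro i hi
    simp only [Finset.mem_filter, Finset.mem_univ, true_and] at hi ⊢
    rw [step_apply hab.ne] at hi
    by_cases hc : i = a ∨ i = b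
    · simp [hc] at hi
    · simpa [hc] using hi
  · intro hsub
    have ha' : a ∈ Finset.univ.filter fun i => ((Function.update (Function.update t a none) b none) i).isSome :=
      hsub (by simp [ha])
    simp only [Finset.mem_filter, Finset.mem_univ, true_and] at ha'
    rw [step_apply hab.ne] at ha'
    simp at ha'

lemma no_infinite_chain :
    ¬ ∃ f : ℕ → (Fin n → Option Bool), ∀ k, Step (f k) (f (k + 1)) := by
  rintro ⟨f, hf⟩
  have key : ∀ k, wt (f k) + k ≤ wt (f 0) := by
    intro k
    induction k with
    | zero => simp
    | succ k ih =>
      have := step_wt (hf k)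
      omega
  have := key (wt (f 0) + 1)
  omega

/-- From any pair witnessing non-reducedness, a step exists. -/
lemma step_of_pair {t : Fin n → Option Bool} :
    ∀ m : ℕ, ∀ a b : Fin n, (b : ℕ) - (a : ℕ) ≤ m → a < b →
      t a = some false → t b = some true → ∃ t', Step t t' := by
  intro m
  induction m with
  | zero =>
    intro a b hm hab _ _
    have : (a : ℕ) < b := hab
    omega
  | succ m ih =>
    intro a b hm hab ha hb
    by_cases hall : ∀ i : Fin n, a < i → i < b → t i = none
    · exact ⟨_, a, b, hab, ha, hb, hall, rfl⟩
    · push_neg at hall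
      obtain ⟨i, hai, hib, hi⟩ := hall
      obtain ⟨x, hx⟩ := Option.ne_none_iff_exists'.mp hi
      cases x with
      | true =>
        refine ih a i ?_ hai ha hx
        have h1 : (a : ℕ) < i := hai
        have h2 : (i : ℕ) < b := hib
        omega
      | false =>
        refine ih i b ?_ hib hx hb
        have h1 : (a : ℕ) < i := hai
        have h2 : (i : ℕ) < b := hib
        omega

lemma exists_step_of_not_reduced {t : Fin n → Option Bool} (h : ¬ Reduced t) :
    ∃ t', Step t t' := by
  simp only [Reduced, not_forall] at h
  obtain ⟨a, b, hab, ha, hb⟩ := h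
  rw [not_not] at hb
  exact step_of_pair ((b : ℕ) - a) a b le_rfl hab ha hb

lemma exists_reduced (t : Fin n → Option Bool) :
    ∃ r, Relation.ReflTransGen Step t r ∧ Reduced r := by
  by_cases h : Reduced t
  · exact ⟨t, Relation.ReflTransGen.refl, h⟩
  · obtain ⟨t', ht'⟩ := exists_step_of_not_reduced h
    have : wt t' < wt t := step_wt ht'
    obtain ⟨r, hr, hred⟩ := exists_reduced t'
    exact ⟨r, Relation.ReflTransGen.head ht' hr, hred⟩
termination_by wt t

lemma not_step_of_reduced {t t' : Fin n → Option Bool} (h : Reduced t) : ¬ Step t t' := by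
  rintro ⟨a, b, hab, ha, hb, -, -⟩
  exact h a b hab ha hb

lemma eq_of_reduced_rtg {t r : Fin n → Option Bool} (h : Reduced t)
    (hr : Relation.ReflTransGen Step t r) : r = t := by
  rcases hr.cases_head with rfl | ⟨c, hc, -⟩
  · rfl
  · exact absurd hc (not_step_of_reduced h)

/-- Local confluence, strong form. -/
lemma local_confluence {t t1 t2 : Fin n → Option Bool}
    (h1 : Step t t1) (h2 : Step t t2) :
    ∃ d, Relation.ReflGen Step t1 d ∧ Relation.ReflTransGen Step t2 d := by
  obtain ⟨a, b, hab, ha, hb, hbet, rfl⟩ := h1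
  obtain ⟨c, d, hcd, hc, hd, hbet', rfl⟩ := h2
  by_cases hac : a = c
  · subst hac
    have hbd : b = d := by
      by_contra hne
      rcases lt_or_gt_of_ne hne with h | h
      · exact absurd hb (by rw [hbet' b hab h]; simp)
      · exact absurd hd (by rw [hbet d hcd h]; simp)
    subst hbd
    exact ⟨_, Relation.ReflGen.refl, Relation.ReflTransGen.refl⟩
  · -- disjoint pairs
    have hbd : b ≠ d := by
      rintro rfl
      rcases lt_or_gt_of_ne hac with h | h
      · exact absurd hc (by rw [hbet c h hcd]; simp)
      · exact absurd ha (by rw [hbet' a h hab]; simp)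
    have hbc : b ≠ c := by rintro rfl; rw [hb] at hc; simp at hc
    have had : a ≠ d := by rintro rfl; rw [ha] at hd; simp at hd
    -- common successor: zero out all four positions
    set u : Fin n → Option Bool := fun i => if i = a ∨ i = b ∨ i = c ∨ i = d then none else t i with hu
    have ht1 : ∀ i, Function.update (Function.update t a none) b none i =
        if i = a ∨ i = b then none else t i := step_apply hab.ne
    have ht2 : ∀ i, Function.update (Function.update t c none) d none i =
        if i = c ∨ i = d then none else t i := step_apply hcd.ne
    have s1 : Step (Function.update (Function.update t a none) b none) u := by
      refine ⟨c, d, hcd, ?_, ?_, ?_, ?_⟩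
      · rw [ht1]; simp [Ne.symm hac, Ne.symm hbc, hc]
      · rw [ht1]; simp [Ne.symm had, Ne.symm hbd, hd]
      · intro i hci hid
        rw [ht1]
        by_cases hic : i = a ∨ i = b
        · simp [hic]
        · simp only [hic, if_false]
          exact hbet' i hci hid
      · funext i
        rw [step_apply hcd.ne, ht1]
        simp only [hu]
        by_cases h1 : i = c ∨ i = d
        · obtain rfl | rfl := h1 <;> simp
        · by_cases h2 : i = a ∨ i = b
          · obtain rfl | rfl := h2 <;> simp
          · push_neg at h1 h2
            simp [h1.1, h1.2, h2.1, h2.2]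
    have s2 : Step (Function.update (Function.update t c none) d none) u := by
      refine ⟨a, b, hab, ?_, ?_, ?_, ?_⟩
      · rw [ht2]; simp [hac, had, ha]
      · rw [ht2]; simp [hbc, hbd, hb]
      · intro i hai hib
        rw [ht2]
        by_cases hic : i = c ∨ i = d
        · simp [hic]
        · simp only [hic, if_false]
          exact hbet i hai hib
      · funext i
        rw [step_apply hab.ne, ht2]
        simp only [hu]
        by_cases h1 : i = a ∨ i = b
        · obtain rfl | rfl := h1 <;> simp
        · by_cases h2 : i = c ∨ i = d
          · obtain rfl | rfl := h2 <;> simp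
          · push_neg at h1 h2
            simp [h1.1, h1.2, h2.1, h2.2]
    exact ⟨u, Relation.ReflGen.single s1, Relation.ReflTransGen.single s2⟩

end RFWD

/-- The reduction process on a sign sequence `t ∈ {+,-}ⁿ` terminates (there is no
infinite chain of reduction steps starting at `t`) and the resulting reduced
sequence is independent of the order of the replacements: there is a unique
reduced sequence reachable from `t`. -/
theorem reduced_form_well_defined (n : ℕ) (t : Fin n → Bool) :
    (¬ ∃ f : ℕ → (Fin n → Option Bool),
        (f 0 = fun i => some (t i)) ∧ ∀ k, Step (f k) (f (k + 1))) ∧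
    (∃! r : Fin n → Option Bool,
        Relation.ReflTransGen Step (fun i => some (t i)) r ∧ Reduced r) := by
  constructor
  · rintro ⟨f, -, hf⟩
    exact RFWD.no_infinite_chain ⟨f, hf⟩
  · obtain ⟨r, hr, hred⟩ := RFWD.exists_reduced (n := n) (fun i => some (t i))
    refine ⟨r, ⟨hr, hred⟩, ?_⟩
    rintro r' ⟨hr', hred'⟩
    obtain ⟨d, hd1, hd2⟩ :=
      Relation.church_rosser (fun a b c hab hac => RFWD.local_confluence hab hac) hr' hr
    rw [← RFWD.eq_of_reduced_rtg hred' hd1, ← RFWD.eq_of_reduced_rtg hred hd2]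
end

section
/- Let t ∈ {+,-}^n and suppose ẽt ≠ 0, with i the largest index such that t^red_i = +. Then the reduced form of ẽt agrees with t^red except that position i changes from + to -; consequently h₊(ẽt) = h₊(t) - 1 and h₋(ẽt) = h₋(t) + 1. -/
-- Signs: `true` encodes `+`, `false` encodes `-`.  In reduced forms, `none` encodes `0`.

/-- Replace the first surviving `+` (i.e. first `some true`) by `0` (i.e. `none`). -/
def zapPlus : List (Option Bool) → List (Option Bool)
  | [] => []
  | some true :: r => none :: r
  | y :: r => y :: zapPlus r

/-- The reduced form `t^red` of a sign sequence `t ∈ {+,-}ⁿ`: repeatedly cancel pairs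
`(t_a, t_b) = (-, +)` with `a < b` and only `0`'s strictly in between, replacing both
entries by `0`, until no `+` appears to the right of a `-`. -/
def red : List Bool → List (Option Bool)
  | [] => []
  | x :: s =>
    let r := red s
    if x then some true :: r
    else if r.any (· == some true) then none :: zapPlus r
    else some false :: r

/-- `h₊(t)`: the number of `+`'s in the reduced form of `t`. -/
def hp (t : List Bool) : ℕ := (red t).count (some true)

/-- `h₋(t)`: the number of `-`'s in the reduced form of `t`. -/
def hm (t : List Bool) : ℕ := (red t).count (some false)

/-- The weight `wt(t) = h₋(t) - h₊(t)`. -/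
def wt (t : List Bool) : ℤ := (hm t : ℤ) - (hp t : ℤ)

/-- The largest index `i` with `t^red_i = +`, if it exists. -/
def eIdx (t : List Bool) : Option ℕ :=
  ((List.range t.length).filter (fun i => (red t)[i]? == some (some true))).getLast?

/-- The smallest index `j` with `t^red_j = -`, if it exists. -/
def fIdx (t : List Bool) : Option ℕ :=
  ((List.range t.length).filter (fun i => (red t)[i]? == some (some false))).head?

/-- The crystal operator `ẽ`: flip the rightmost surviving `+` to `-` (or `0` = `none`). -/
def etilde (t : List Bool) : Option (List Bool) :=
  (eIdx t).map (fun i => t.set i false)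

/-- The crystal operator `f̃`: flip the leftmost surviving `-` to `+` (or `0` = `none`). -/
def ftilde (t : List Bool) : Option (List Bool) :=
  (fIdx t).map (fun i => t.set i true)

/-- The order `≻` on `{+,-}ⁿ`: `t' ≻ t` iff there is an index `i` such that
`t'_j = t_j` for all `j > i`, while `t'_i = -` and `t_i = +`. -/
def succOrd (t' t : List Bool) : Prop :=
  ∃ i : ℕ, (∀ j, i < j → t'[j]? = t[j]?) ∧ t'[i]? = some false ∧ t[i]? = some true


section Aux

lemma zapPlus_cons_st (r : List (Option Bool)) : zapPlus (some true :: r) = none :: r := rfl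
lemma zapPlus_cons_sf (r : List (Option Bool)) :
    zapPlus (some false :: r) = some false :: zapPlus r := rfl
lemma zapPlus_cons_none (r : List (Option Bool)) :
    zapPlus (none :: r) = none :: zapPlus r := rfl

lemma red_cons_true (s : List Bool) : red (true :: s) = some true :: red s := by
  simp [red]

lemma red_cons_false_pos (s : List Bool) (h : (red s).any (· == some true) = true) :
    red (false :: s) = none :: zapPlus (red s) := by
  simp [red, h]

lemma red_cons_false_neg (s : List Bool) (h : (red s).any (· == some true) = false) :
    red (false :: s) = some false :: red s := by
  simp [red, h]

lemma zapPlus_getElem? (l : List (Option Bool)) (k : ℕ)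
    (h : (zapPlus l)[k]? = some (some true)) : l[k]? = some (some true) := by
  induction l generalizing k with
  | nil => simp [zapPlus] at h
  | cons a r ih =>
    match a with
    | some true =>
      rw [zapPlus_cons_st] at h
      cases k with
      | zero => simp at h
      | succ k => simp_all
    | some false =>
      rw [zapPlus_cons_sf] at h
      cases k with
      | zero => simpa using h
      | succ k => simp_all
    | none =>
      rw [zapPlus_cons_none] at h
      cases k with
      | zero => simp at h
      | succ k => simp_all

lemma zapPlus_set (l : List (Option Bool)) (k : ℕ)
    (h : (zapPlus l)[k]? = some (some true)) :
    zapPlus (l.set k (some false)) = (zapPlus l).set k (some false) := by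
  induction l generalizing k with
  | nil => simp [zapPlus] at h
  | cons a r ih =>
    match a with
    | some true =>
      rw [zapPlus_cons_st] at h ⊢
      cases k with
      | zero => simp at h
      | succ k =>
        simp only [List.set_cons_succ, zapPlus_cons_st]
    | some false =>
      rw [zapPlus_cons_sf] at h
      cases k with
      | zero => simpa using h
      | succ k =>
        simp only [List.getElem?_cons_succ] at h
        simp only [List.set_cons_succ, zapPlus_cons_sf, ih _ h]
    | none =>
      rw [zapPlus_cons_none] at h
      cases k with
      | zero => simp at h
      | succ k =>
        simp only [List.getElem?_cons_succ] at h
        simp only [List.set_cons_succ, zapPlus_cons_none, ih _ h]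

lemma zapPlus_getElem?_gt (l : List (Option Bool)) (k : ℕ)
    (h : (zapPlus l)[k]? = some (some true)) :
    ∀ j, k < j → (zapPlus l)[j]? = l[j]? := by
  induction l generalizing k with
  | nil => simp [zapPlus] at h
  | cons a r ih =>
    match a with
    | some true =>
      rw [zapPlus_cons_st] at h ⊢
      cases k with
      | zero => simp at h
      | succ k =>
        intro j hj
        match j, hj with
        | j + 1, _ => simp
    | some false =>
      rw [zapPlus_cons_sf] at h ⊢
      cases k with
      | zero => simpa using h
      | succ k =>
        simp only [List.getElem?_cons_succ] at h
        intro j hj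
        match j, hj with
        | j + 1, hj =>
          simp only [List.getElem?_cons_succ]
          exact ih _ h _ (by omega)
    | none =>
      rw [zapPlus_cons_none] at h ⊢
      cases k with
      | zero => simp at h
      | succ k =>
        simp only [List.getElem?_cons_succ] at h
        intro j hj
        match j, hj with
        | j + 1, hj =>
          simp only [List.getElem?_cons_succ]
          exact ih _ h _ (by omega)

lemma zapPlus_exists_lt (l : List (Option Bool)) (k : ℕ)
    (h : (zapPlus l)[k]? = some (some true)) :
    ∃ j, j < k ∧ l[j]? = some (some true) := by
  induction l generalizing k with
  | nil => simp [zapPlus] at h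
  | cons a r ih =>
    match a with
    | some true =>
      rw [zapPlus_cons_st] at h
      cases k with
      | zero => simp at h
      | succ k => exact ⟨0, by omega, by simp⟩
    | some false =>
      rw [zapPlus_cons_sf] at h
      cases k with
      | zero => simpa using h
      | succ k =>
        simp only [List.getElem?_cons_succ] at h
        obtain ⟨j, hj, hjv⟩ := ih _ h
        exact ⟨j + 1, by omega, by simpa⟩
    | none =>
      rw [zapPlus_cons_none] at h
      cases k with
      | zero => simp at h
      | succ k =>
        simp only [List.getElem?_cons_succ] at h
        obtain ⟨j, hj, hjv⟩ := ih _ h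
        exact ⟨j + 1, by omega, by simpa⟩

lemma any_st_of_getElem? (r : List (Option Bool)) (k : ℕ)
    (h : r[k]? = some (some true)) : r.any (· == some true) = true := by
  have : some true ∈ r := List.mem_of_getElem? h
  rw [List.any_eq_true]
  exact ⟨_, this, by simp⟩

/-- Core lemma: setting the last `+` of the reduced form to `-`. -/
lemma red_set_main (t : List Bool) (i : ℕ)
    (h1 : (red t)[i]? = some (some true))
    (h2 : ∀ j, i < j → (red t)[j]? ≠ some (some true)) :
    red (t.set i false) = (red t).set i (some false) := by
  induction t generalizing i with
  | nil => simp [red] at h1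
  | cons x s ih =>
    cases x with
    | true =>
      rw [red_cons_true] at h1 h2 ⊢
      cases i with
      | zero =>
        have hno : (red s).any (· == some true) = false := by
          by_contra hcon
          rw [Bool.not_eq_false, List.any_eq_true] at hcon
          obtain ⟨a, ha, hav⟩ := hcon
          rw [beq_iff_eq] at hav; subst hav
          obtain ⟨k, hkv⟩ := List.mem_iff_getElem?.mp ha
          exact h2 (k + 1) (by omega) (by simpa using hkv)
        show red (false :: s) = _
        rw [red_cons_false_neg s hno]
        rfl
      | succ k =>
        simp only [List.getElem?_cons_succ] at h1
        have h2' : ∀ j, k < j → (red s)[j]? ≠ some (some true) := by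
          intro j hj
          have := h2 (j + 1) (by omega)
          simpa using this
        show red (true :: s.set k false) = _
        rw [red_cons_true, ih k h1 h2']
        rfl
    | false =>
      by_cases hany : (red s).any (· == some true) = true
      · rw [red_cons_false_pos s hany] at h1 h2 ⊢
        cases i with
        | zero => simp at h1
        | succ k =>
          simp only [List.getElem?_cons_succ] at h1
          have hrs : (red s)[k]? = some (some true) := zapPlus_getElem? _ _ h1
          have h2' : ∀ j, k < j → (red s)[j]? ≠ some (some true) := by
            intro j hj hcon
            have := h2 (j + 1) (by omega)
            rw [List.getElem?_cons_succ, zapPlus_getElem?_gt _ _ h1 j hj] at this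
            exact this hcon
          obtain ⟨j, hjk, hjv⟩ := zapPlus_exists_lt _ _ h1
          have hsetv : ((red s).set k (some false))[j]? = some (some true) := by
            rw [List.getElem?_set_ne (by omega)]
            exact hjv
          show red (false :: s.set k false) = _
          rw [red_cons_false_pos _ (by rw [ih k hrs h2']; exact any_st_of_getElem? _ _ hsetv),
            ih k hrs h2', zapPlus_set _ _ h1]
          rfl
      · rw [Bool.not_eq_true] at hany
        rw [red_cons_false_neg s hany] at h1
        cases i with
        | zero => simp at h1
        | succ k =>
          simp only [List.getElem?_cons_succ] at h1
          have := any_st_of_getElem? _ _ h1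
          rw [hany] at this
          exact absurd this (by simp)

lemma count_set_aux (l : List (Option Bool)) (i : ℕ)
    (h : l[i]? = some (some true)) :
    (l.set i (some false)).count (some true) + 1 = l.count (some true) ∧
    (l.set i (some false)).count (some false) = l.count (some false) + 1 := by
  induction l generalizing i with
  | nil => simp at h
  | cons a r ih =>
    cases i with
    | zero =>
      simp only [List.getElem?_cons_zero, Option.some_inj] at h
      subst h
      simp [List.count_cons]
    | succ k =>
      simp only [List.getElem?_cons_succ] at h
      obtain ⟨c1, c2⟩ := ih k h
      constructor <;> simp [List.count_cons, c1, c2] <;> omega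

lemma sorted_getLast?_max {l : List ℕ} (hs : l.Pairwise (· < ·)) {i : ℕ}
    (h : l.getLast? = some i) : ∀ x ∈ l, x ≤ i := by
  induction l with
  | nil => simp at h
  | cons a l ih =>
    cases l with
    | nil =>
      simp at h; subst h; simp
    | cons b l =>
      rw [List.getLast?_cons_cons] at h
      have hmem : i ∈ b :: l := List.mem_of_getLast? h
      intro x hx
      rcases List.mem_cons.mp hx with rfl | hx
      · exact le_of_lt ((List.pairwise_cons.mp hs).1 i hmem)
      · exact ih (List.pairwise_cons.mp hs).2 h x hx

end Aux

/-- If `ẽt ≠ 0` and `i` is the largest index with `t^red_i = +`, then the reduced form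
of `ẽt` agrees with `t^red` except that position `i` changes from `+` to `-`;
consequently `h₊(ẽt) = h₊(t) - 1` and `h₋(ẽt) = h₋(t) + 1`. -/
theorem red_etilde (t t' : List Bool) (i : ℕ) (hi : eIdx t = some i)
    (ht' : etilde t = some t') :
    red t' = (red t).set i (some false) ∧ hp t' = hp t - 1 ∧ hm t' = hm t + 1 := by
  -- extract t' = t.set i false
  rw [etilde, hi, Option.map_some] at ht'
  have ht'' : t' = t.set i false := (Option.some_inj.mp ht').symm
  subst ht''
  -- facts from eIdx
  set L := (List.range t.length).filter (fun i => (red t)[i]? == some (some true)) with hL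
  have hiL : i ∈ L := List.mem_of_getLast? hi
  have hpred : (red t)[i]? = some (some true) := by
    have := List.of_mem_filter hiL
    simpa using this
  have hsorted : L.Pairwise (· < ·) :=
    (List.pairwise_lt_range).filter _
  have hmax : ∀ x ∈ L, x ≤ i := sorted_getLast?_max hsorted hi
  have hlen : (red t).length = t.length := by
    clear * -
    induction t with
    | nil => simp [red]
    | cons x s ih =>
      cases x with
      | true => rw [red_cons_true]; simpa using ih
      | false =>
        by_cases hany : (red s).any (· == some true) = true
        · rw [red_cons_false_pos s hany]
          have : ∀ l : List (Option Bool), (zapPlus l).length = l.length := by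
            intro l
            induction l with
            | nil => rfl
            | cons a r ih2 =>
              match a with
              | some true => simp [zapPlus_cons_st]
              | some false => simp [zapPlus_cons_sf, ih2]
              | none => simp [zapPlus_cons_none, ih2]
          simp [this, ih]
        · rw [red_cons_false_neg s (Bool.not_eq_true _ ▸ hany)]
          simpa using ih
  have h2 : ∀ j, i < j → (red t)[j]? ≠ some (some true) := by
    intro j hj hcon
    have hjlen : j < t.length := by
      by_contra hge
      rw [List.getElem?_eq_none (by rw [hlen]; omega)] at hcon
      exact absurd hcon (by simp)
    have hjL : j ∈ L := by
      rw [hL, List.mem_filter]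
      exact ⟨List.mem_range.mpr hjlen, by simp [hcon]⟩
    have := hmax j hjL
    omega
  have hred := red_set_main t i hpred h2
  obtain ⟨c1, c2⟩ := count_set_aux (red t) i hpred
  refine ⟨hred, ?_, ?_⟩
  · rw [hp, hp, hred]; omega
  · rw [hm, hm, hred]; omega
end

section
/- Let t ∈ {+,-}^n and let l be an index with h₋^l(t) > h₋^{l+1}(t) (so t_l = - and this - survives in the reduced form of (t_l,...,t_n)). Let t̄ be obtained from t by changing position l from - to +. List the sequences t¹ ≺ t² ≺ ... ≺ t^N obtained from t̄ by changing one + to a - (ordered so that t^N ≻ ... ≻ t¹ in the order: t' ≻ t if there is i with t_j = t'_j for j > i, t'_i = -, t_i = +), and let j be such that t^j = t. Then: (1) h₋^{l+1}(t^j) + 1 = h₋^l(t^j); (2) h₋^{l+1}(t^i) = h₋^{l+1}(t^j) for all i < j; (3) h₋^{l+1}(t^i) ≥ h₋^l(t^j) + 1 for all i > j. -/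
lemma zap_count_false (r : List (Option Bool)) :
    (zapPlus r).count (some false) = r.count (some false) := by
  induction r with
  | nil => rfl
  | cons y r ih =>
    match y with
    | some true => simp [zapPlus, List.count_cons]
    | some false => simp [zapPlus, List.count_cons, ih]
    | none => simp [zapPlus, List.count_cons, ih]

lemma zap_count_true (r : List (Option Bool)) (h : some true ∈ r) :
    (zapPlus r).count (some true) + 1 = r.count (some true) := by
  induction r with
  | nil => simp at h
  | cons y r ih =>
    match y with
    | some true => simp [zapPlus, List.count_cons]
    | some false =>
      simp only [List.mem_cons] at h
      simp [zapPlus, List.count_cons, ih (by tauto)]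
    | none =>
      simp only [List.mem_cons] at h
      simp [zapPlus, List.count_cons, ih (by tauto)]

lemma any_iff_hp (s : List Bool) :
    (red s).any (· == some true) = true ↔ hp s ≠ 0 := by
  rw [List.any_eq_true]
  unfold hp
  constructor
  · rintro ⟨x, hx, hb⟩
    rw [beq_iff_eq] at hb; subst hb
    simpa [Nat.pos_iff_ne_zero] using List.count_pos_iff.2 hx
  · intro h
    exact ⟨some true, List.count_pos_iff.1 (Nat.pos_of_ne_zero h), by simp⟩

lemma hp_cons_true (s : List Bool) : hp (true :: s) = hp s + 1 := by
  simp [hp, red, List.count_cons]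

lemma hm_cons_true (s : List Bool) : hm (true :: s) = hm s := by
  simp [hm, red, List.count_cons]

lemma hm_cons_false_pos (s : List Bool) (h : hp s ≠ 0) : hm (false :: s) = hm s := by
  have := (any_iff_hp s).2 h
  simp [hm, red, this, List.count_cons, zap_count_false]

lemma hm_cons_false_zero (s : List Bool) (h : hp s = 0) : hm (false :: s) = hm s + 1 := by
  have : ¬ ((red s).any (· == some true) = true) := by
    rw [any_iff_hp]; tauto
  simp [hm, red, this, List.count_cons]

lemma hp_cons_false_pos (s : List Bool) (h : hp s ≠ 0) : hp (false :: s) + 1 = hp s := by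
  have h2 := (any_iff_hp s).2 h
  have hmem : some true ∈ red s := List.count_pos_iff.1 (Nat.pos_of_ne_zero h)
  simp [hp, red, h2, List.count_cons, zap_count_true _ hmem]

lemma hp_cons_false_zero (s : List Bool) (h : hp s = 0) : hp (false :: s) = 0 := by
  have : ¬ ((red s).any (· == some true) = true) := by rw [any_iff_hp]; tauto
  simpa [hp, red, this, List.count_cons] using h

lemma wt_cons_true (s : List Bool) : wt (true :: s) = wt s - 1 := by
  unfold wt
  rw [hp_cons_true, hm_cons_true]; push_cast; ring

lemma wt_cons_false (s : List Bool) : wt (false :: s) = wt s + 1 := by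
  unfold wt
  by_cases h : hp s = 0
  · rw [hm_cons_false_zero _ h, hp_cons_false_zero _ h, h]; push_cast; ring
  · have h1 := hp_cons_false_pos _ h
    rw [hm_cons_false_pos _ h]
    omega

lemma wt_flip (u : List Bool) (q : ℕ) (h : u[q]? = some true) :
    wt (u.set q false) = wt u + 2 := by
  induction u generalizing q with
  | nil => simp at h
  | cons a u ih =>
    match q with
    | 0 =>
      simp only [List.getElem?_cons_zero, Option.some_inj] at h
      subst h
      rw [List.set_cons_zero, wt_cons_false, wt_cons_true]; ring
    | q + 1 =>
      simp only [List.getElem?_cons_succ] at h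
      rw [List.set_cons_succ]
      match a with
      | true => rw [wt_cons_true, wt_cons_true, ih q h]; ring
      | false => rw [wt_cons_false, wt_cons_false, ih q h]; ring

lemma drop_set_of_lt (x : List Bool) (p m : ℕ) (h : p < m) (a : Bool) :
    (x.set p a).drop m = x.drop m := by
  apply List.ext_getElem?
  intro i
  rw [List.getElem?_drop, List.getElem?_drop, List.getElem?_set_ne (by omega)]

lemma drop_set_of_le (x : List Bool) (p m : ℕ) (h : m ≤ p) (a : Bool) :
    (x.set p a).drop m = (x.drop m).set (p - m) a := by
  apply List.ext_getElem?
  intro i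
  rw [List.getElem?_drop]
  by_cases hi : p = m + i
  · subst hi
    simp only [Nat.add_sub_cancel_left]
    by_cases hlen : m + i < x.length
    · rw [List.getElem?_set_eq_of_lt a hlen,
        List.getElem?_set_eq_of_lt a (show i < (x.drop m).length by
          simp [List.length_drop]; omega)]
    · rw [List.getElem?_eq_none (by simpa using (by omega : x.length ≤ m + i)),
        List.getElem?_eq_none (by simp [List.length_drop]; omega)]
  · rw [List.getElem?_set_ne (by omega), List.getElem?_set_ne (by omega), List.getElem?_drop]


/-- The key combinatorial lemma. Let `t ∈ {+,-}ⁿ` and `l` an index with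
`h₋^l(t) > h₋^{l+1}(t)` (so `t_l = -`). Let `t̄` be `t` with position `l` changed to `+`,
and consider the sequences obtained from `t̄` by changing one `+` (at position `p`) to a
`-`, compared with `t` via the order `≻`. Then:
(1) `h₋^{l+1}(t) + 1 = h₋^l(t)`;
(2) any such sequence `≺ t` has the same `h₋^{l+1}` as `t`;
(3) any such sequence `≻ t` has `h₋^{l+1} ≥ h₋^l(t) + 1`.
(Indices here are `0`-based, so `h₋^{l+1}` is `hm (· .drop (l+1))` etc.) -/
theorem comb_lemma (n : ℕ) (t : List Bool) (hlen : t.length = n) (l : ℕ) (hl : l < n)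
    (htl : t[l]? = some false)
    (hgt : hm (t.drop (l + 1)) < hm (t.drop l)) :
    hm (t.drop (l + 1)) + 1 = hm (t.drop l) ∧
    (∀ p, p < n → (t.set l true)[p]? = some true →
      succOrd t ((t.set l true).set p false) →
      hm (((t.set l true).set p false).drop (l + 1)) = hm (t.drop (l + 1))) ∧
    (∀ p, p < n → (t.set l true)[p]? = some true →
      succOrd ((t.set l true).set p false) t →
      hm (t.drop l) + 1 ≤ hm (((t.set l true).set p false).drop (l + 1))) := by
  have hlt : l < t.length := by omega
  have hget : t[l] = false := by
    rw [List.getElem?_eq_getElem hlt] at htl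
    exact Option.some_inj.mp htl
  have hdrop : t.drop l = false :: t.drop (l + 1) := by
    rw [List.drop_eq_getElem_cons hlt, hget]
  have hpu : hp (t.drop (l + 1)) = 0 := by
    by_contra h
    rw [hdrop, hm_cons_false_pos _ h] at hgt
    omega
  have part1 : hm (t.drop (l + 1)) + 1 = hm (t.drop l) := by
    rw [hdrop, hm_cons_false_zero _ hpu]
  refine ⟨part1, ?_, ?_⟩
  · -- part 2
    intro p hpn hset hsucc
    have hpl : p ≤ l := by
      by_contra hc
      push_neg at hc
      have hpne : p ≠ l := by omega
      have htp : t[p]? = some true := by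
        rw [← List.getElem?_set_ne (Ne.symm hpne) (a := true)]; exact hset
      have hsp : ((t.set l true).set p false)[p]? = some false :=
        List.getElem?_set_eq_of_lt _ (by simpa using by omega)
      obtain ⟨i, hj, hi1, hi2⟩ := hsucc
      have hil : i = l := by
        by_contra hne
        rcases eq_or_ne i p with rfl | hip
        · rw [htp] at hi1; exact (by simp at hi1)
        · rw [List.getElem?_set_ne (Ne.symm hip), List.getElem?_set_ne (Ne.symm hne)] at hi2
          rw [hi1] at hi2; exact (by simp at hi2)
      subst hil
      have := hj p (by omega)
      rw [htp, hsp] at this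
      simp at this
    rw [drop_set_of_lt _ _ _ (by omega), drop_set_of_lt _ _ _ (by omega)]
  · -- part 3
    intro p hpn hset hsucc
    obtain ⟨i, hj, hi1, hi2⟩ := hsucc
    have hil : i ≠ l := by
      intro h; subst h; rw [htl] at hi2; simp at hi2
    have hip : i = p := by
      by_contra hne
      rw [List.getElem?_set_ne (Ne.symm hne), List.getElem?_set_ne (Ne.symm hil)] at hi1
      rw [hi1] at hi2; simp at hi2
    rw [hip] at hj hi1 hi2
    have hpne : p ≠ l := hip ▸ hil
    have hlp : l < p := by
      rcases lt_or_gt_of_ne hpne with h | h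
      · exfalso
        have := hj l h
        rw [List.getElem?_set_ne hpne,
          List.getElem?_set_eq_of_lt _ (by simpa using hlt), htl] at this
        simp at this
      · exact h
    have htp : t[p]? = some true := by
      rw [← List.getElem?_set_ne (Ne.symm hpne) (a := true)]; exact hset
    have hup : (t.drop (l + 1))[p - (l + 1)]? = some true := by
      rw [List.getElem?_drop]
      rw [show l + 1 + (p - (l + 1)) = p by omega]
      exact htp
    have hdropeq : ((t.set l true).set p false).drop (l + 1)
        = (t.drop (l + 1)).set (p - (l + 1)) false := by
      rw [drop_set_of_le _ _ _ (by omega), drop_set_of_lt _ _ _ (by omega)]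
    rw [hdropeq, ← part1]
    have hflip := wt_flip (t.drop (l + 1)) (p - (l + 1)) hup
    unfold wt at hflip
    omega
end

section
/- Part (3) of the key combinatorial lemma: let t, t' ∈ {+,-}^n agree at all positions except l and p with l < p, where t_l = -, t_p = +, t'_l = +, t'_p = -. Suppose t_{l+1} = ... = t_{p-1} = - and the - at position l of t survives in the reduced form of (t_l,...,t_n). Then h₋^{l+1}(t') = h₋^l(t) + 1. -/
lemma red_cons_false (s : List Bool) :
    red (false :: s) = if (red s).any (· == some true) then none :: zapPlus (red s)
      else some false :: red s := by
  simp [red]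

lemma any_iff (s : List Bool) : (red s).any (· == some true) = true ↔ 0 < hp s := by
  rw [hp, List.count_pos_iff]
  simp [List.any_eq_true]

lemma hp_cons_false (s : List Bool) : hp (false :: s) = hp s - 1 := by
  rw [hp, red_cons_false]
  by_cases h : (red s).any (· == some true)
  · rw [if_pos h]
    have hm : some true ∈ red s := by
      have := (any_iff s).1 h; rw [hp, List.count_pos_iff] at this; exact this
    have := zap_count_true _ hm
    simp only [List.count_cons, hp]
    simp; omega
  · rw [if_neg h]
    have : hp s = 0 := by
      by_contra hc
      exact h ((any_iff s).2 (Nat.pos_of_ne_zero hc))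
    unfold hp at this
    simp [List.count_cons, this, hp]

lemma hm_cons_false (s : List Bool) :
    hm (false :: s) = if hp s = 0 then hm s + 1 else hm s := by
  rw [hm, red_cons_false]
  by_cases h : (red s).any (· == some true)
  · have : ¬ hp s = 0 := by have := (any_iff s).1 h; omega
    rw [if_pos h, if_neg this]
    simp [List.count_cons, zap_count_false, hm]
  · have : hp s = 0 := by
      by_contra hc; exact h ((any_iff s).2 (Nat.pos_of_ne_zero hc))
    rw [if_neg h, if_pos this]
    simp [List.count_cons, hm]

lemma rep_counts (m : ℕ) (s : List Bool) :
    hp (List.replicate m false ++ s) = hp s - m ∧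
    hm (List.replicate m false ++ s) = hm s + (m - hp s) := by
  induction m with
  | zero => simp
  | succ m ih =>
    obtain ⟨ihp, ihm⟩ := ih
    rw [List.replicate_succ, List.cons_append, hp_cons_false, hm_cons_false, ihp, ihm]
    constructor
    · omega
    · by_cases h : hp s - m = 0 <;> simp [h] <;> omega


lemma getElem?_rep_app (m : ℕ) (s : List Bool) (i : ℕ) :
    (List.replicate m false ++ s)[i]? = if i < m then some false else s[i - m]? := by
  by_cases h : i < m
  · rw [if_pos h, List.getElem?_append_left (by simpa using h)]
    simp [List.getElem?_replicate, h]
  · rw [if_neg h, List.getElem?_append_right (by simpa using Nat.le_of_not_lt h)]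
    simp


/-- Part (3) of the key combinatorial lemma: let `t, t' ∈ {+,-}ⁿ` agree at all positions
except `l` and `p` with `l < p`, where `t_l = -`, `t_p = +`, `t'_l = +`, `t'_p = -`.
Suppose `t_{l+1} = ... = t_{p-1} = -` and the `-` at position `l` of `t` survives in
the reduced form of `(t_l, ..., t_n)`. Then `h₋^{l+1}(t') = h₋^l(t) + 1`. -/
theorem comb_lemma_part3 (t t' : List Bool) (hlen : t'.length = t.length)
    (l p : ℕ) (hlp : l < p) (hpn : p < t.length)
    (hagree : ∀ k, k ≠ l → k ≠ p → t'[k]? = t[k]?)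
    (htl : t[l]? = some false) (htp : t[p]? = some true)
    (htl' : t'[l]? = some true) (htp' : t'[p]? = some false)
    (hbetween : ∀ q, l < q → q < p → t[q]? = some false)
    (hsurv : (red (t.drop l))[0]? = some (some false)) :
    hm (t'.drop (l + 1)) = hm (t.drop l) + 1 := by
  set m := p - l - 1 with hmdef
  set rest := t.drop (p + 1) with hrest
  have hA : t.drop l = false :: (List.replicate m false ++ true :: rest) := by
    apply List.ext_getElem?
    intro i
    rw [List.getElem?_drop, List.getElem?_cons]
    by_cases h0 : i = 0
    · subst h0; simpa using htl
    rw [if_neg h0, getElem?_rep_app]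
    by_cases h1 : i - 1 < m
    · rw [if_pos h1]
      exact hbetween (l + i) (by omega) (by omega)
    rw [if_neg h1, List.getElem?_cons]
    by_cases h2 : i - 1 - m = 0
    · rw [if_pos h2]
      have he : l + i = p := by omega
      rw [he]; exact htp
    rw [if_neg h2, hrest, List.getElem?_drop]
    congr 1
    omega
  have hB : t'.drop (l + 1) = List.replicate (m + 1) false ++ rest := by
    apply List.ext_getElem?
    intro i
    rw [List.getElem?_drop, getElem?_rep_app]
    by_cases h1 : i < m + 1
    · rw [if_pos h1]
      by_cases h2 : i = m
      · have he : l + 1 + i = p := by omega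
        rw [he]; exact htp'
      · rw [hagree _ (by omega) (by omega)]
        exact hbetween _ (by omega) (by omega)
    · rw [if_neg h1, hrest, List.getElem?_drop, hagree _ (by omega) (by omega)]
      congr 1
      omega
  rw [hA] at hsurv
  rw [red_cons_false] at hsurv
  have hu0 : hp (List.replicate m false ++ true :: rest) = 0 := by
    by_cases h : (red (List.replicate m false ++ true :: rest)).any (· == some true)
    · rw [if_pos h] at hsurv; simp at hsurv
    · by_contra hc
      exact h ((any_iff _).2 (Nat.pos_of_ne_zero hc))
  obtain ⟨h1p, h1m⟩ := rep_counts m (true :: rest)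
  obtain ⟨h2p, h2m⟩ := rep_counts (m + 1) rest
  rw [hp_cons_true] at h1p h1m
  rw [hm_cons_true] at h1m
  rw [hA, hB, hm_cons_false, if_pos hu0, h1m, h2m]
  rw [h1p] at hu0
  omega
end

section
/- Reading the addable and removable boxes of a Young diagram λ in increasing order of content, they strictly alternate starting and ending with addable: between any two removable boxes (in content order) there is an addable box, and the boxes of minimal and maximal content in B(λ) are addable. -/
-- A Young diagram is given by row lengths `l 1 ≥ l 2 ≥ ...` (rows indexed from `1`),
-- with finitely many boxes; the box in row `a`, column `b` has content `b - a`.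

/-- Row `j` has an addable box (at position `(j, l j + 1)`). -/
def addable (l : ℕ → ℕ) (j : ℕ) : Prop := 1 ≤ j ∧ (j = 1 ∨ l j < l (j - 1))

/-- Row `j` has a removable box (at position `(j, l j)`). -/
def removable (l : ℕ → ℕ) (j : ℕ) : Prop := 1 ≤ j ∧ l (j + 1) < l j

/-- The content of the addable box of row `j`. -/
def addC (l : ℕ → ℕ) (j : ℕ) : ℤ := (l j : ℤ) + 1 - j

/-- The content of the removable box of row `j`. -/
def remC (l : ℕ → ℕ) (j : ℕ) : ℤ := (l j : ℤ) - j


/-- Reading the addable and removable boxes of a Young diagram in increasing order of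
content, they strictly alternate, starting and ending with addable: between any two
removable boxes there is an addable box, and every removable box lies strictly between
two addable boxes in content (so the boxes of minimal and maximal content in `B(λ)`
are addable). -/
theorem addable_removable_alternate (l : ℕ → ℕ)
    (hanti : ∀ j, 1 ≤ j → l (j + 1) ≤ l j) (hfin : ∃ N, 1 ≤ N ∧ l N = 0) :
    (∀ j k, removable l j → removable l k → remC l j < remC l k →
      ∃ m, addable l m ∧ remC l j < addC l m ∧ addC l m < remC l k) ∧
    (∀ j, removable l j →
      (∃ m, addable l m ∧ addC l m < remC l j) ∧
      (∃ m, addable l m ∧ remC l j < addC l m)) := by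
  have mono : ∀ a b : ℕ, 1 ≤ a → a ≤ b → l b ≤ l a := by
    intro a b ha hab
    induction b with
    | zero => omega
    | succ n ih =>
      rcases Nat.lt_or_ge a (n + 1) with h | h
      · exact le_trans (hanti n (by omega)) (ih (by omega))
      · have : a = n + 1 := by omega
        simp [this]
  constructor
  · intro j k hj hk hlt
    obtain ⟨hj1, hjr⟩ := hj
    obtain ⟨hk1, hkr⟩ := hk
    have hkj : k < j := by
      by_contra h
      push_neg at h
      have := mono j k hj1 h
      unfold remC at hlt; omega
    refine ⟨k + 1, ⟨by omega, Or.inr ?_⟩, ?_, ?_⟩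
    · simpa using hkr
    · have := mono (k + 1) j (by omega) (by omega)
      unfold remC addC
      push_cast
      omega
    · unfold remC addC
      push_cast
      omega
  · intro j hj
    obtain ⟨hj1, hjr⟩ := hj
    constructor
    · refine ⟨j + 1, ⟨by omega, Or.inr (by simpa using hjr)⟩, ?_⟩
      unfold remC addC
      push_cast
      omega
    · refine ⟨1, ⟨le_refl 1, Or.inl rfl⟩, ?_⟩
      have := mono 1 j le_rfl hj1
      unfold remC addC
      push_cast
      omega
end

section
/- Let κ ∈ ℂ with exp(2πiκ) ≠ 1, s ∈ ℂ^ℓ, and define for a box x in row a, column b of component i of an ℓ-multipartition: d^p(x) := κℓ(s_i + b - a) - i - κΣ_j s_j. If x and y are two distinct boxes in B_z(λ) (the addable/removable z-boxes of λ, where a box is a z-box if exp(2πiκ(s_i + b - a)) = z), then d^p(x) - d^p(y) is a nonzero integer. -/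
open Complex in
/-- The set `B_z(μ)` of addable and removable `z`-boxes of the `ℓ`-multipartition `μ`:
triples `(i, a, b)` (component, row, column) that are addable or removable boxes of
`μ^{(i)}` and satisfy `exp(2π√-1 κ (s_i + b - a)) = z`. -/
def Bz (L : ℕ) (κ : ℂ) (s : Fin L → ℂ) (z : ℂ) (μ : Fin L → ℕ → ℕ) :
    Set (Fin L × ℕ × ℕ) :=
  {x | ((addable (μ x.1) x.2.1 ∧ x.2.2 = μ x.1 x.2.1 + 1) ∨
        (removable (μ x.1) x.2.1 ∧ x.2.2 = μ x.1 x.2.1)) ∧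
       Complex.exp (2 * Real.pi * Complex.I * κ * (s x.1 + (x.2.2 : ℂ) - (x.2.1 : ℂ))) = z}

open scoped BigOperators in
/-- The function `d^p(x) = κ ℓ (s_i + b - a) - i - κ Σ_j s_j` for a box `x = (i, a, b)`. -/
noncomputable def dP (L : ℕ) (κ : ℂ) (s : Fin L → ℂ) (x : Fin L × ℕ × ℕ) : ℂ :=
  κ * L * (s x.1 + (x.2.2 : ℂ) - (x.2.1 : ℂ)) - ((x.1 : ℕ) : ℂ) - κ * ∑ j, s j


lemma mono_le (l : ℕ → ℕ) (h : ∀ j, 1 ≤ j → l (j + 1) ≤ l j) :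
    ∀ j j', 1 ≤ j → j ≤ j' → l j' ≤ l j := by
  intro j j' hj hjj
  induction j', hjj using Nat.le_induction with
  | base => exact le_refl _
  | succ k hk ih => exact le_trans (h k (hj.trans hk)) ih

lemma box_unique (l : ℕ → ℕ) (h : ∀ j, 1 ≤ j → l (j + 1) ≤ l j)
    (a b a' b' : ℕ)
    (hx : (addable l a ∧ b = l a + 1) ∨ (removable l a ∧ b = l a))
    (hy : (addable l a' ∧ b' = l a' + 1) ∨ (removable l a' ∧ b' = l a'))
    (hc : (b : ℤ) - a = (b' : ℤ) - a') : a = a' ∧ b = b' := by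
  have hmono := mono_le l h
  rcases hx with ⟨⟨ha1, _⟩, hb⟩ | ⟨⟨ha1, ha2⟩, hb⟩ <;>
    rcases hy with ⟨⟨ha1', _⟩, hb'⟩ | ⟨⟨ha1', ha2'⟩, hb'⟩ <;> subst hb <;> subst hb'
  · rcases lt_trichotomy a a' with hlt | heq | hgt
    · have := hmono a a' ha1 hlt.le; omega
    · omega
    · have := hmono a' a ha1' hgt.le; omega
  · rcases le_or_gt a a' with hle | hgt
    · have := hmono a a' ha1 hle; omega
    · have h1 := hmono (a' + 1) a (by omega) hgt; omega
  · rcases le_or_gt a' a with hle | hgt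
    · have := hmono a' a ha1' hle; omega
    · have h1 := hmono (a + 1) a' (by omega) hgt; omega
  · rcases lt_trichotomy a a' with hlt | heq | hgt
    · have := hmono a a' ha1 hlt.le; omega
    · omega
    · have := hmono a' a ha1' hgt.le; omega

/-- If `exp(2πiκ) ≠ 1` and `x ≠ y` are two distinct boxes in `B_z(λ)`, then
`d^p(x) - d^p(y)` is a nonzero integer. -/
theorem dP_diff_nonzero_integer (L : ℕ) (κ : ℂ)
    (hκ : Complex.exp (2 * Real.pi * Complex.I * κ) ≠ 1)
    (s : Fin L → ℂ) (z : ℂ) (lam : Fin L → ℕ → ℕ)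
    (hY : ∀ i, (∀ j, 1 ≤ j → lam i (j + 1) ≤ lam i j) ∧ ∃ N, 1 ≤ N ∧ lam i N = 0)
    (x y : Fin L × ℕ × ℕ) (hx : x ∈ Bz L κ s z lam) (hy : y ∈ Bz L κ s z lam)
    (hxy : x ≠ y) :
    ∃ m : ℤ, m ≠ 0 ∧ dP L κ s x - dP L κ s y = (m : ℂ) := by
  obtain ⟨hbx, hex⟩ := hx
  obtain ⟨hby, hey⟩ := hy
  set cx : ℂ := s x.1 + (x.2.2 : ℂ) - (x.2.1 : ℂ) with hcx
  set cy : ℂ := s y.1 + (y.2.2 : ℂ) - (y.2.1 : ℂ) with hcy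
  have hz1 : Complex.exp (2 * Real.pi * Complex.I * κ * cx -
      2 * Real.pi * Complex.I * κ * cy) = 1 := by
    rw [Complex.exp_sub, hex, hey,
      div_self (by rw [← hey]; exact Complex.exp_ne_zero _)]
  rw [Complex.exp_eq_one_iff] at hz1
  obtain ⟨n, hn⟩ := hz1
  have hpi : (2 * (Real.pi : ℂ) * Complex.I) ≠ 0 := by
    simp [Real.pi_ne_zero, Complex.I_ne_zero]
  have hkd : κ * (cx - cy) = (n : ℂ) := by
    have h2 : (2 * (Real.pi : ℂ) * Complex.I) * (κ * (cx - cy)) =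
        (2 * (Real.pi : ℂ) * Complex.I) * (n : ℂ) := by
      linear_combination hn
    exact mul_left_cancel₀ hpi h2
  have hκ0 : κ ≠ 0 := by
    intro h0
    apply hκ
    rw [h0, mul_zero, Complex.exp_zero]
  refine ⟨(L : ℤ) * n - (x.1 : ℤ) + (y.1 : ℤ), ?_, ?_⟩
  · intro hm0
    have hxL : (x.1 : ℕ) < L := x.1.isLt
    have hyL : (y.1 : ℕ) < L := y.1.isLt
    have hn0 : n = 0 := by
      by_contra hne
      have h1 : (1 : ℤ) ≤ |n| := Int.one_le_abs hne
      have h2 : (L : ℤ) ≤ |(L : ℤ) * n| := by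
        rw [abs_mul, abs_of_nonneg (by positivity : (0 : ℤ) ≤ (L : ℤ))]
        nlinarith
      have h3 : |(L : ℤ) * n| < (L : ℤ) := by
        rw [abs_lt]; omega
      omega
    have hi : x.1 = y.1 := by
      rw [hn0, mul_zero] at hm0
      apply Fin.ext; omega
    have hcc : cx - cy = 0 := by
      have := hkd
      rw [hn0] at this
      push_cast at this
      rcases mul_eq_zero.mp this with h | h
      · exact absurd h hκ0
      · exact h
    have hcint : (x.2.2 : ℤ) - (x.2.1 : ℤ) = (y.2.2 : ℤ) - (y.2.1 : ℤ) := by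
      have h4 : (x.2.2 : ℂ) - (x.2.1 : ℂ) = (y.2.2 : ℂ) - (y.2.1 : ℂ) := by
        rw [hcx, hcy, hi] at hcc
        linear_combination hcc
      exact_mod_cast h4
    rw [hi] at hbx
    obtain ⟨hab, hbb⟩ := box_unique (lam y.1) (hY y.1).1 x.2.1 x.2.2 y.2.1 y.2.2
      hbx hby hcint
    exact hxy (Prod.ext hi (Prod.ext hab hbb))
  · simp only [dP, ← hcx, ← hcy]
    push_cast
    linear_combination (L : ℂ) * hkd
end
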